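/- Let d > 1 be an integer which is not a perfect square. Then there exist positive constants c₁, c₂, c₃ depending only on d such that the following holds: if Q is a positive integer and x is an integer with x² ≡ d (mod Q), then there exist u, r ∈ ℤ with gcd(u,r) = 1, c₁·√Q ≤ |r| ≤ c₂·√Q, and |x/Q − u/r| ≤ c₃/r². -/

import Mathlib

set_option maxHeartbeats 1600000 in
theorem stmt13 (d : ℤ) (hd : 1 < d) (hns : ¬IsSquare d) :
    ∃ c₁ c₂ c₃ : ℝ, 0 < c₁ ∧ 0 < c₂ ∧ 0 < c₃ ∧
      ∀ (Q : ℕ), 0 < Q → ∀ x : ℤ, (Q : ℤ) ∣ x ^ 2 - d →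
        ∃ u r : ℤ, Int.gcd u r = 1 ∧
          c₁ * Real.sqrt Q ≤ |(r : ℝ)| ∧ |(r : ℝ)| ≤ c₂ * Real.sqrt Q ∧
          |(x : ℝ) / (Q : ℝ) - (u : ℝ) / (r : ℝ)| ≤ c₃ / (r : ℝ) ^ 2 := by
  have hd0 : (0:ℝ) < (d:ℝ) := by exact_mod_cast lt_trans one_pos hd
  refine ⟨(Real.sqrt d)⁻¹, 1, 1, inv_pos.mpr (Real.sqrt_pos.mpr hd0), one_pos, one_pos, ?_⟩
  intro Q hQ x hx
  have hQR : (0:ℝ) < (Q:ℝ) := by exact_mod_cast hQ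
  set n : ℕ := Nat.sqrt Q with hn
  have hn1 : 0 < n := Nat.sqrt_pos.mpr hQ
  obtain ⟨j, k, hk0, hkn, hjk⟩ :=
    Real.exists_int_int_abs_mul_sub_le ((x:ℝ) / (Q:ℝ)) hn1
  set t : ℤ := k * x - j * Q with ht
  -- bound on t : |t| ≤ Q/(n+1), and t^2 < Q
  have htR : |(t:ℝ)| ≤ (Q:ℝ) / ((n:ℝ) + 1) := by
    have h1 : (t:ℝ) = ((k:ℝ) * ((x:ℝ)/(Q:ℝ)) - (j:ℝ)) * (Q:ℝ) := by
      push_cast [ht]; field_simp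
    rw [h1, abs_mul, abs_of_pos hQR]
    calc |(k:ℝ) * ((x:ℝ)/(Q:ℝ)) - (j:ℝ)| * (Q:ℝ) ≤ (1/((n:ℝ)+1)) * (Q:ℝ) := by gcongr
      _ = (Q:ℝ)/((n:ℝ)+1) := by ring
  have hnQ : (Q:ℝ) < ((n:ℝ) + 1)^2 := by
    have h : Q < (n+1)*(n+1) := Nat.lt_succ_sqrt Q
    rw [sq]
    exact_mod_cast h
  have ht2 : (t:ℝ)^2 < (Q:ℝ) := by
    have h2 : (t:ℝ)^2 ≤ ((Q:ℝ) / ((n:ℝ)+1))^2 := by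
      rw [← sq_abs]
      gcongr
    calc (t:ℝ)^2 ≤ ((Q:ℝ) / ((n:ℝ)+1))^2 := h2
      _ < (Q:ℝ) := by
        rw [div_pow, div_lt_iff₀ (by positivity)]
        calc (Q:ℝ)^2 = (Q:ℝ) * (Q:ℝ) := sq (Q:ℝ)
          _ < (Q:ℝ) * ((n:ℝ)+1)^2 := by
            exact (mul_lt_mul_iff_right₀ hQR).mpr hnQ
  have ht2' : t^2 < (Q:ℤ) := by exact_mod_cast ht2
  -- reduce to coprime
  set g : ℤ := (Int.gcd j k : ℤ) with hg
  have hgk : g ∣ k := Int.gcd_dvd_right j k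
  have hgj : g ∣ j := Int.gcd_dvd_left j k
  have hgnat : 0 < Int.gcd j k := Int.gcd_pos_iff.mpr (Or.inr (ne_of_gt hk0))
  have hg0 : 0 < g := by rw [hg]; exact_mod_cast hgnat
  set k' : ℤ := k / g with hk'
  set j' : ℤ := j / g with hj'
  have hkk : k = g * k' := (Int.mul_ediv_cancel' hgk).symm
  have hjj : j = g * j' := (Int.mul_ediv_cancel' hgj).symm
  have hk'0 : 0 < k' := by
    rcases lt_trichotomy k' 0 with h | h | h
    · nlinarith [hkk, hk0, hg0]
    · rw [h, mul_zero] at hkk; omega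
    · exact h
  set t' : ℤ := k' * x - j' * Q with ht'
  have htt : t = g * t' := by rw [ht, ht', hkk, hjj]; ring
  have ht'2 : t'^2 < (Q:ℤ) := by
    have h1 : t'^2 ≤ t^2 := by
      have hgg : (1:ℤ) ≤ g^2 := by nlinarith
      calc t'^2 = t'^2 * 1 := by ring
        _ ≤ t'^2 * g^2 := mul_le_mul_of_nonneg_left hgg (sq_nonneg t')
        _ = t^2 := by rw [htt]; ring
    omega
  -- coprimality
  have hcop : Int.gcd j' k' = 1 := Int.gcd_div_gcd_div_gcd hgnat
  -- divisibility: Q ∣ t'^2 - d * k'^2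
  have hdvd : (Q:ℤ) ∣ t'^2 - d * k'^2 := by
    have h1 : t'^2 - d * k'^2 = k'^2 * (x^2 - d) + (Q:ℤ) * (j'^2 * Q - 2 * k' * x * j') := by
      rw [ht']; ring
    rw [h1]
    exact dvd_add (Dvd.dvd.mul_left hx _) (Dvd.intro _ rfl)
  -- nonzero
  have hne : t'^2 - d * k'^2 ≠ 0 := by
    intro h
    have heq : t'^2 = d * k'^2 := by omega
    have hkd : k' ∣ t' := by
      rw [← Int.pow_dvd_pow_iff (two_ne_zero), heq]
      exact dvd_mul_left _ _
    obtain ⟨s, hs⟩ := hkd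
    apply hns
    refine ⟨s, ?_⟩
    have : k'^2 * d = k'^2 * (s * s) := by rw [hs] at heq; nlinarith
    exact mul_left_cancel₀ (by positivity) this
  have hQle : (Q:ℤ) ≤ d * k'^2 - t'^2 := by
    have habs : (Q:ℤ) ≤ |t'^2 - d * k'^2| := Int.le_of_dvd (abs_pos.mpr hne) ((dvd_abs _ _).mpr hdvd)
    have hdk : 0 < d * k'^2 := by positivity
    have hmlt : t'^2 - d * k'^2 < (Q:ℤ) := by linarith
    have hmneg : t'^2 - d * k'^2 < 0 ∨ 0 ≤ t'^2 - d * k'^2 := lt_or_ge _ _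
    rcases hmneg with h | h
    · rw [abs_of_neg h] at habs; linarith
    · rw [abs_of_nonneg h] at habs; linarith
  clear_value t' j' k' g t n
  -- real bounds
  have hk'R : (0:ℝ) < (k':ℝ) := by exact_mod_cast hk'0
  have habsk : |(k':ℝ)| = (k':ℝ) := abs_of_pos hk'R
  -- lower bound
  have hlow : (Real.sqrt d)⁻¹ * Real.sqrt Q ≤ |(k':ℝ)| := by
    have h1 : (Q:ℝ) ≤ (d:ℝ) * (k':ℝ)^2 := by
      have : (Q:ℤ) ≤ d * k'^2 := by linarith [hQle, sq_nonneg t']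
      exact_mod_cast this
    have h2 : Real.sqrt Q ≤ Real.sqrt ((d:ℝ) * (k':ℝ)^2) := Real.sqrt_le_sqrt h1
    rw [Real.sqrt_mul hd0.le, Real.sqrt_sq_eq_abs] at h2
    rw [habsk] at h2 ⊢
    rw [inv_mul_le_iff₀ (Real.sqrt_pos.mpr hd0)]
    linarith
  -- upper bound
  have hup : |(k':ℝ)| ≤ 1 * Real.sqrt Q := by
    rw [habsk, one_mul]
    have h1 : (k':ℝ) ≤ (n:ℝ) := by
      have hk'k : k' ≤ k := by
        calc k' = 1 * k' := (one_mul k').symm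
          _ ≤ g * k' := mul_le_mul_of_nonneg_right (by omega) hk'0.le
          _ = k := hkk.symm
      have : k ≤ (n:ℤ) := hkn
      exact_mod_cast le_trans hk'k this
    have h2 : (n:ℝ) ≤ Real.sqrt Q := by
      rw [Real.le_sqrt (by positivity) hQR.le]
      have h3 : n ^ 2 ≤ Q := by rw [hn]; exact Nat.sqrt_le' Q
      exact_mod_cast h3
    linarith
  -- approximation bound
  have happ : |(x:ℝ) / (Q:ℝ) - (j':ℝ) / (k':ℝ)| ≤ 1 / (k':ℝ)^2 := by
    have hform : (x:ℝ) / (Q:ℝ) - (j':ℝ) / (k':ℝ) = (t':ℝ) / ((Q:ℝ) * (k':ℝ)) := by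
      have h1 : ((t':ℤ):ℝ) = (k':ℝ) * (x:ℝ) - (j':ℝ) * (Q:ℝ) := by rw [ht']; push_cast; ring
      rw [h1, div_sub_div _ _ (ne_of_gt hQR) (ne_of_gt hk'R)]
      congr 1
      ring
    rw [hform, abs_div, abs_of_pos (by positivity : (0:ℝ) < (Q:ℝ) * (k':ℝ))]
    rw [div_le_div_iff₀ (by positivity) (by positivity)]
    have habst : |(t':ℝ)| ≤ Real.sqrt Q := by
      rw [Real.le_sqrt (abs_nonneg _) hQR.le, sq_abs]
      have h4 : ((t'^2 : ℤ) : ℝ) ≤ (Q:ℝ) := by exact_mod_cast ht'2.le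
      push_cast at h4
      linarith
    have hkle : (k':ℝ) ≤ Real.sqrt Q := by rw [habsk] at hup; linarith
    have h5 : |(t':ℝ)| * (k':ℝ) ≤ Real.sqrt Q * Real.sqrt Q :=
      mul_le_mul habst hkle hk'R.le (Real.sqrt_nonneg _)
    calc |(t':ℝ)| * (k':ℝ)^2 = (|(t':ℝ)| * (k':ℝ)) * (k':ℝ) := by ring
      _ ≤ (Real.sqrt Q * Real.sqrt Q) * (k':ℝ) := mul_le_mul_of_nonneg_right h5 hk'R.le
      _ = Real.sqrt Q * (Real.sqrt Q * (k':ℝ)) := by ring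
      _ = (Real.sqrt Q * Real.sqrt Q) * (k':ℝ) := by ring
      _ = 1 * ((Q:ℝ) * (k':ℝ)) := by rw [Real.mul_self_sqrt hQR.le]; ring
  exact ⟨j', k', hcop, hlow, hup, happ⟩
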